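/- Let S ⊆ ℝᵏ and Ṡ ⊆ ℝᵏ, let 𝒜, ℬ₁, ℬ₂, 𝒞₁, 𝒟₁₁, 𝒟₁₂, 𝒞₂ be continuous matrix-valued functions of s ∈ ℝᵏ (of conformable dimensions), let P : ℝᵏ → (symmetric n×n real matrices) be differentiable with P(s) positive semidefinite for all s ∈ S, let M be a fixed symmetric matrix, λ ≥ 0, and σ > 0. Assume that for all (s, ρ) ∈ S × Ṡ the symmetric block matrix [[P(s)𝒜(s) + 𝒜(s)ᵀP(s) + ∂P(s,ρ), P(s)ℬ₁(s), P(s)ℬ₂(s)], [ℬ₁(s)ᵀP(s), 0, 0], [ℬ₂(s)ᵀP(s), 0, −I]] + λ[𝒞₁(s) 𝒟₁₁(s) 𝒟₁₂(s)]ᵀM[𝒞₁(s) 𝒟₁₁(s) 𝒟₁₂(s)] is negative semidefinite, where ∂P(s,ρ) = Σⱼ (∂P/∂sⱼ)(s)·ρⱼ, and that for all s ∈ S the block matrix [[P(s), 𝒞₂(s)ᵀ], [𝒞₂(s), σ²·I]] is positive definite. Let s : [0,∞) → ℝᵏ be differentiable with s(t) ∈ S and s′(t) ∈ Ṡ for all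 t, let q, η be continuous vector-valued functions on [0,∞), and let χ be continuously differentiable with χ(0) = 0 and χ′(t) = 𝒜(s(t))χ(t) + ℬ₁(s(t))q(t) + ℬ₂(s(t))η(t) for all t ≥ 0. Define r(t) = 𝒞₁(s(t))χ(t) + 𝒟₁₁(s(t))q(t) + 𝒟₁₂(s(t))η(t) and z(t) = 𝒞₂(s(t))χ(t), and assume the hard IQC condition ∫₀ᵀ r(τ)ᵀ M r(τ) dτ ≥ 0 for every T ≥ 0. Then for every T ≥ 0, ‖z(T)‖² ≤ σ² ∫₀ᵀ ‖η(τ)‖² dτ; in particular, if ∫₀^∞ ‖η(τ)‖² dτ < ∞, then sup_{t ≥ 0} ‖z(t)‖ ≤ σ · (∫₀^∞ ‖η(τ)‖² dτ)^{1/2}. -/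

import Mathlib

open Matrix

lemma clm_pi_apply {k : ℕ} (f : (Fin k → ℝ) →L[ℝ] ℝ) (ρ : Fin k → ℝ) :
    f ρ = ∑ l, f (Pi.single l 1) * ρ l := by
  have h : ρ = ∑ l, ρ l • (Pi.single l (1:ℝ) : Fin k → ℝ) := by
    ext j
    simp [Finset.sum_apply, Pi.single_apply]
  calc f ρ = f (∑ l, ρ l • (Pi.single l (1:ℝ) : Fin k → ℝ)) := by rw [← h]
    _ = ∑ l, ρ l • f (Pi.single l 1) := by rw [map_sum]; simp
    _ = ∑ l, f (Pi.single l 1) * ρ l := by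
        refine Finset.sum_congr rfl fun l _ => ?_
        rw [smul_eq_mul, mul_comm]

lemma dotP_transpose_mulVec {m p : Type*} [Fintype m] [Fintype p]
    (A : Matrix m p ℝ) (x : p → ℝ) (y : m → ℝ) :
    x ⬝ᵥ (Aᵀ *ᵥ y) = (A *ᵥ x) ⬝ᵥ y := by
  rw [mulVec_transpose, dotProduct_comm x, ← dotProduct_mulVec]
  exact dotProduct_comm _ _

lemma hasDerivAt_quadForm {n : ℕ} {Pt : ℝ → Matrix (Fin n) (Fin n) ℝ}
    {x : ℝ → Fin n → ℝ} {Pt' : Matrix (Fin n) (Fin n) ℝ} {x' : Fin n → ℝ} {t : ℝ}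
    (hP : ∀ i j, HasDerivAt (fun u => Pt u i j) (Pt' i j) t)
    (hx : HasDerivAt x x' t) :
    HasDerivAt (fun u => x u ⬝ᵥ (Pt u *ᵥ x u))
      (x' ⬝ᵥ (Pt t *ᵥ x t) + x t ⬝ᵥ (Pt' *ᵥ x t) + x t ⬝ᵥ (Pt t *ᵥ x')) t := by
  have hxi : ∀ i, HasDerivAt (fun u => x u i) (x' i) t := fun i => hasDerivAt_pi.1 hx i
  have key : (fun u => x u ⬝ᵥ (Pt u *ᵥ x u))
      = fun u => ∑ i, ∑ j, x u i * (Pt u i j * x u j) := by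
    funext u
    simp [dotProduct, mulVec, Finset.mul_sum]
  rw [key]
  have h := HasDerivAt.fun_sum (u := (Finset.univ : Finset (Fin n)))
    (fun i _ => HasDerivAt.fun_sum (u := (Finset.univ : Finset (Fin n)))
      (fun j _ => ((hxi i).fun_mul ((hP i j).fun_mul (hxi j)))))
  have hval : x' ⬝ᵥ (Pt t *ᵥ x t) + x t ⬝ᵥ (Pt' *ᵥ x t) + x t ⬝ᵥ (Pt t *ᵥ x') =
      ∑ i, ∑ j, (x' i * (Pt t i j * x t j) + x t i * (Pt' i j * x t j + Pt t i j * x' j)) := by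
    simp only [dotProduct, mulVec, Finset.mul_sum, ← Finset.sum_add_distrib]
    exact Finset.sum_congr rfl fun i _ => Finset.sum_congr rfl fun j _ => by ring
  rw [hval]
  exact h

lemma lmi_quad {n nq nη nr : ℕ}
    (Pm dPm Am : Matrix (Fin n) (Fin n) ℝ)
    (B₁m : Matrix (Fin n) (Fin nq) ℝ) (B₂m : Matrix (Fin n) (Fin nη) ℝ)
    (C₁m : Matrix (Fin nr) (Fin n) ℝ) (D₁₁m : Matrix (Fin nr) (Fin nq) ℝ)
    (D₁₂m : Matrix (Fin nr) (Fin nη) ℝ) (M : Matrix (Fin nr) (Fin nr) ℝ)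
    (lam : ℝ) (χv : Fin n → ℝ) (qv : Fin nq → ℝ) (ηv : Fin nη → ℝ) :
    (Sum.elim χv (Sum.elim qv ηv)) ⬝ᵥ
      ((Matrix.fromBlocks (Pm * Am + Amᵀ * Pm + dPm)
          (Matrix.fromCols (Pm * B₁m) (Pm * B₂m))
          (Matrix.fromRows (B₁mᵀ * Pm) (B₂mᵀ * Pm))
          (Matrix.fromBlocks 0 0 0 (-(1 : Matrix (Fin nη) (Fin nη) ℝ)))
        + lam • ((Matrix.fromCols C₁m (Matrix.fromCols D₁₁m D₁₂m))ᵀ * M *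
            (Matrix.fromCols C₁m (Matrix.fromCols D₁₁m D₁₂m)))) *ᵥ
        (Sum.elim χv (Sum.elim qv ηv))) =
    ((Am *ᵥ χv + B₁m *ᵥ qv + B₂m *ᵥ ηv) ⬝ᵥ (Pm *ᵥ χv)
      + χv ⬝ᵥ (dPm *ᵥ χv)
      + χv ⬝ᵥ (Pm *ᵥ (Am *ᵥ χv + B₁m *ᵥ qv + B₂m *ᵥ ηv)))
      + lam * ((C₁m *ᵥ χv + D₁₁m *ᵥ qv + D₁₂m *ᵥ ηv) ⬝ᵥ
          (M *ᵥ (C₁m *ᵥ χv + D₁₁m *ᵥ qv + D₁₂m *ᵥ ηv)))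
      - ηv ⬝ᵥ ηv := by
  simp only [add_mulVec, smul_mulVec, dotProduct_add, add_dotProduct, dotProduct_smul,
    smul_eq_mul, Matrix.fromBlocks_mulVec, fromCols_mulVec_sumElim, fromRows_mulVec,
    sumElim_dotProduct_sumElim, ← mulVec_mulVec, dotP_transpose_mulVec, mulVec_add,
    zero_mulVec, neg_mulVec, one_mulVec, add_zero, zero_add, dotProduct_neg, dotProduct_zero,
    Sum.elim_comp_inl, Sum.elim_comp_inr]
  ring

lemma schur_quad {n nz : ℕ} (Pm : Matrix (Fin n) (Fin n) ℝ) (C₂m : Matrix (Fin nz) (Fin n) ℝ)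
    (c : ℝ) (hc : c ≠ 0) (χv : Fin n → ℝ) :
    (Sum.elim χv (-(c⁻¹) • (C₂m *ᵥ χv))) ⬝ᵥ
      ((Matrix.fromBlocks Pm C₂mᵀ C₂m (c • (1 : Matrix (Fin nz) (Fin nz) ℝ))) *ᵥ
        (Sum.elim χv (-(c⁻¹) • (C₂m *ᵥ χv)))) =
    χv ⬝ᵥ (Pm *ᵥ χv) - c⁻¹ * ((C₂m *ᵥ χv) ⬝ᵥ (C₂m *ᵥ χv)) := by
  simp only [Matrix.fromBlocks_mulVec, sumElim_dotProduct_sumElim, dotProduct_add,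
    smul_mulVec, one_mulVec, mulVec_smul, dotProduct_smul, smul_dotProduct,
    dotP_transpose_mulVec, smul_eq_mul, neg_mul, mul_neg, neg_neg, Sum.elim_comp_inl,
    Sum.elim_comp_inr]
  field_simp
  ring

lemma dot_self_nonneg {m : Type*} [Fintype m] (v : m → ℝ) : 0 ≤ v ⬝ᵥ v :=
  Finset.sum_nonneg fun i _ => mul_self_nonneg _

/-- Worst-case SSE theorem: if the parameter-dependent dissipation LMI (without performance
term) holds on `S × Ṡ` with positive semidefinite `P(s)`, the Schur-complement condition
`[[P(s), C₂(s)ᵀ], [C₂(s), σ²I]] ≻ 0` holds on `S`, and the IQC output `r` satisfies the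
hard IQC, then the output `z = C₂χ` of the extended LPV error system with zero initial state
satisfies `‖z(T)‖² ≤ σ² ∫₀ᵀ ‖η‖²` for all `T ≥ 0`; in particular, if `‖η‖² ∈ L¹(0,∞)`,
then `‖z(t)‖ ≤ σ (∫₀^∞ ‖η‖²)^{1/2}` for all `t ≥ 0`. -/
theorem worst_case_SSE {k n nq nη nr nz : ℕ}
    (S Sdot : Set (Fin k → ℝ))
    (A : (Fin k → ℝ) → Matrix (Fin n) (Fin n) ℝ)
    (B₁ : (Fin k → ℝ) → Matrix (Fin n) (Fin nq) ℝ)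
    (B₂ : (Fin k → ℝ) → Matrix (Fin n) (Fin nη) ℝ)
    (C₁ : (Fin k → ℝ) → Matrix (Fin nr) (Fin n) ℝ)
    (D₁₁ : (Fin k → ℝ) → Matrix (Fin nr) (Fin nq) ℝ)
    (D₁₂ : (Fin k → ℝ) → Matrix (Fin nr) (Fin nη) ℝ)
    (C₂ : (Fin k → ℝ) → Matrix (Fin nz) (Fin n) ℝ)
    (hAc : Continuous A) (hB₁c : Continuous B₁) (hB₂c : Continuous B₂)
    (hC₁c : Continuous C₁) (hD₁₁c : Continuous D₁₁) (hD₁₂c : Continuous D₁₂)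
    (hC₂c : Continuous C₂)
    (P : (Fin k → ℝ) → Matrix (Fin n) (Fin n) ℝ)
    (hPdiff : ∀ i j, Differentiable ℝ (fun u => P u i j))
    (hPsymm : ∀ u, (P u).IsSymm)
    (hPpos : ∀ s ∈ S, (P s).PosSemidef)
    (dP : (Fin k → ℝ) → (Fin k → ℝ) → Matrix (Fin n) (Fin n) ℝ)
    (hdP : ∀ s ρ i j,
      dP s ρ i j = ∑ l, fderiv ℝ (fun u => P u i j) s (Pi.single l 1) * ρ l)
    (M : Matrix (Fin nr) (Fin nr) ℝ) (hM : M.IsSymm)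
    (lam σ : ℝ) (hlam : 0 ≤ lam) (hσ : 0 < σ)
    (hLMI : ∀ s ∈ S, ∀ ρ ∈ Sdot,
      (-(Matrix.fromBlocks
          (P s * A s + (A s)ᵀ * P s + dP s ρ)
          (Matrix.fromCols (P s * B₁ s) (P s * B₂ s))
          (Matrix.fromRows ((B₁ s)ᵀ * P s) ((B₂ s)ᵀ * P s))
          (Matrix.fromBlocks 0 0 0 (-(1 : Matrix (Fin nη) (Fin nη) ℝ)))
        + lam •
            ((Matrix.fromCols (C₁ s) (Matrix.fromCols (D₁₁ s) (D₁₂ s)))ᵀ * M *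
              (Matrix.fromCols (C₁ s) (Matrix.fromCols (D₁₁ s) (D₁₂ s)))))).PosSemidef)
    (hSchur : ∀ s ∈ S,
      (Matrix.fromBlocks (P s) (C₂ s)ᵀ (C₂ s)
        (σ ^ 2 • (1 : Matrix (Fin nz) (Fin nz) ℝ))).PosDef)
    (s : ℝ → Fin k → ℝ) (s' : ℝ → Fin k → ℝ)
    (hs : ∀ t, 0 ≤ t → HasDerivAt s (s' t) t)
    (hsS : ∀ t, 0 ≤ t → s t ∈ S) (hs'S : ∀ t, 0 ≤ t → s' t ∈ Sdot)
    (q : ℝ → Fin nq → ℝ) (η : ℝ → Fin nη → ℝ) (hq : Continuous q) (hη : Continuous η)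
    (χ : ℝ → Fin n → ℝ) (hχ0 : χ 0 = 0)
    (hχ : ∀ t, 0 ≤ t →
      HasDerivAt χ (A (s t) *ᵥ χ t + B₁ (s t) *ᵥ q t + B₂ (s t) *ᵥ η t) t)
    (hχc : Continuous χ)
    (r : ℝ → Fin nr → ℝ)
    (hr : ∀ t, r t = C₁ (s t) *ᵥ χ t + D₁₁ (s t) *ᵥ q t + D₁₂ (s t) *ᵥ η t)
    (z : ℝ → Fin nz → ℝ)
    (hz : ∀ t, z t = C₂ (s t) *ᵥ χ t)
    (hIQC : ∀ T, 0 ≤ T → 0 ≤ ∫ τ in (0:ℝ)..T, r τ ⬝ᵥ (M *ᵥ r τ)) :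
    (∀ T, 0 ≤ T →
      z T ⬝ᵥ z T ≤ σ ^ 2 * ∫ τ in (0:ℝ)..T, η τ ⬝ᵥ η τ) ∧
    (MeasureTheory.IntegrableOn (fun τ => η τ ⬝ᵥ η τ) (Set.Ioi (0:ℝ)) →
      ∀ t, 0 ≤ t →
        Real.sqrt (z t ⬝ᵥ z t) ≤ σ * Real.sqrt (∫ τ in Set.Ioi (0:ℝ), η τ ⬝ᵥ η τ)) := by
  -- a globally continuous version of the scheduling signal
  set ss : ℝ → Fin k → ℝ := fun t => s (max t 0) with hss_def
  have hss_eq : ∀ t : ℝ, 0 ≤ t → ss t = s t := fun t ht => by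
    simp only [hss_def, max_eq_left ht]
  have hssc : Continuous ss := by
    rw [continuous_iff_continuousAt]
    intro t
    rcases lt_or_ge t 0 with h | h
    · have hev : (fun _ : ℝ => s 0) =ᶠ[nhds t] ss := by
        filter_upwards [Iio_mem_nhds h] with u hu
        simp [hss_def, max_eq_right (le_of_lt (Set.mem_Iio.mp hu))]
      exact continuousAt_const.congr hev
    · have h1 : ContinuousAt (fun u : ℝ => max u 0) t :=
        (continuous_id.max continuous_const).continuousAt
      have h2 : ContinuousAt s (max t 0) := (hs _ (le_max_right t 0)).continuousAt
      exact ContinuousAt.comp h2 h1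
  have hPc : Continuous P := continuous_matrix fun i j => (hPdiff i j).continuous
  -- continuous versions of r and the dissipation bound integrand
  set rr : ℝ → Fin nr → ℝ :=
    fun t => C₁ (ss t) *ᵥ χ t + D₁₁ (ss t) *ᵥ q t + D₁₂ (ss t) *ᵥ η t with hrr_def
  have hrr_eq : ∀ t : ℝ, 0 ≤ t → rr t = r t := by
    intro t ht
    rw [hrr_def, hr t]
    simp only [hss_eq t ht]
  have hrrc : Continuous rr := by
    refine Continuous.add (Continuous.add ?_ ?_) ?_
    · exact (hC₁c.comp hssc).matrix_mulVec hχc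
    · exact (hD₁₁c.comp hssc).matrix_mulVec hq
    · exact (hD₁₂c.comp hssc).matrix_mulVec hη
  set gg : ℝ → ℝ := fun t => η t ⬝ᵥ η t - lam * (rr t ⬝ᵥ (M *ᵥ rr t)) with hgg_def
  have hggc : Continuous gg := by
    refine (hη.dotProduct hη).sub (continuous_const.mul ?_)
    exact hrrc.dotProduct (continuous_const.matrix_mulVec hrrc)
  set G : ℝ → ℝ := fun T => ∫ τ in (0:ℝ)..T, gg τ with hG_def
  have hG : ∀ x : ℝ, HasDerivAt G (gg x) x := fun x =>
    (hggc.integral_hasStrictDerivAt 0 x).hasDerivAt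
  have hGc : Continuous G := continuous_iff_continuousAt.2 fun x => (hG x).continuousAt
  -- the storage function
  set V : ℝ → ℝ := fun t => χ t ⬝ᵥ (P (ss t) *ᵥ χ t) with hV_def
  have hVc : Continuous V :=
    hχc.dotProduct (((hPc.comp hssc).matrix_mulVec hχc))
  have hVd : ∀ x : ℝ, 0 < x → HasDerivAt V
      ((A (s x) *ᵥ χ x + B₁ (s x) *ᵥ q x + B₂ (s x) *ᵥ η x) ⬝ᵥ (P (s x) *ᵥ χ x)
        + χ x ⬝ᵥ (dP (s x) (s' x) *ᵥ χ x)
        + χ x ⬝ᵥ (P (s x) *ᵥ (A (s x) *ᵥ χ x + B₁ (s x) *ᵥ q x + B₂ (s x) *ᵥ η x))) x := by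
    intro x hx
    have hPent : ∀ i j, HasDerivAt (fun u => P (ss u) i j) (dP (s x) (s' x) i j) x := by
      intro i j
      have h1 : HasDerivAt (fun u => P (s u) i j)
          (fderiv ℝ (fun u => P u i j) (s x) (s' x)) x :=
        (hPdiff i j (s x)).hasFDerivAt.comp_hasDerivAt x (hs x hx.le)
      have heq : (fun u => P (ss u) i j) =ᶠ[nhds x] (fun u => P (s u) i j) := by
        filter_upwards [Ioi_mem_nhds hx] with u hu
        simp [hss_def, max_eq_left (le_of_lt (Set.mem_Ioi.mp hu))]
      have hval : dP (s x) (s' x) i j = fderiv ℝ (fun u => P u i j) (s x) (s' x) := by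
        rw [hdP]
        exact (clm_pi_apply _ _).symm
      rw [hval]
      exact heq.hasDerivAt_iff.2 h1
    have h := hasDerivAt_quadForm hPent (hχ x hx.le)
    rw [hss_eq x hx.le] at h
    exact h
  -- value of the derivative of V - G is nonpositive on (0,∞)
  set W : ℝ → ℝ := fun t => V t - G t with hW_def
  have hWd : ∀ x : ℝ, 0 < x → HasDerivAt W
      (((A (s x) *ᵥ χ x + B₁ (s x) *ᵥ q x + B₂ (s x) *ᵥ η x) ⬝ᵥ (P (s x) *ᵥ χ x)
        + χ x ⬝ᵥ (dP (s x) (s' x) *ᵥ χ x)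
        + χ x ⬝ᵥ (P (s x) *ᵥ (A (s x) *ᵥ χ x + B₁ (s x) *ᵥ q x + B₂ (s x) *ᵥ η x))) - gg x) x :=
    fun x hx => (hVd x hx).sub (hG x)
  have hderiv_le : ∀ x ∈ interior (Set.Ici (0:ℝ)), deriv W x ≤ 0 := by
    rw [interior_Ici]
    intro x hx
    rw [(hWd x hx).deriv]
    have hmem := hLMI (s x) (hsS x hx.le) (s' x) (hs'S x hx.le)
    have key := (posSemidef_iff_dotProduct_mulVec.1 hmem).2 (Sum.elim (χ x) (Sum.elim (q x) (η x)))
    rw [star_trivial, neg_mulVec, dotProduct_neg] at key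
    have key2 : (Sum.elim (χ x) (Sum.elim (q x) (η x))) ⬝ᵥ
        ((Matrix.fromBlocks
          (P (s x) * A (s x) + (A (s x))ᵀ * P (s x) + dP (s x) (s' x))
          (Matrix.fromCols (P (s x) * B₁ (s x)) (P (s x) * B₂ (s x)))
          (Matrix.fromRows ((B₁ (s x))ᵀ * P (s x)) ((B₂ (s x))ᵀ * P (s x)))
          (Matrix.fromBlocks 0 0 0 (-(1 : Matrix (Fin nη) (Fin nη) ℝ)))
        + lam •
            ((Matrix.fromCols (C₁ (s x)) (Matrix.fromCols (D₁₁ (s x)) (D₁₂ (s x))))ᵀ * M *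
              (Matrix.fromCols (C₁ (s x)) (Matrix.fromCols (D₁₁ (s x)) (D₁₂ (s x)))))) *ᵥ
          (Sum.elim (χ x) (Sum.elim (q x) (η x)))) ≤ 0 := by linarith
    rw [lmi_quad] at key2
    have hrx : C₁ (s x) *ᵥ χ x + D₁₁ (s x) *ᵥ q x + D₁₂ (s x) *ᵥ η x = r x := (hr x).symm
    rw [hrx] at key2
    have hggx : gg x = η x ⬝ᵥ η x - lam * (r x ⬝ᵥ (M *ᵥ r x)) := by
      rw [hgg_def]
      simp only [hrr_eq x hx.le]
    rw [hggx]
    linarith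
  have hWc : ContinuousOn W (Set.Ici (0:ℝ)) := (hVc.sub hGc).continuousOn
  have hWdiff : DifferentiableOn ℝ W (interior (Set.Ici (0:ℝ))) := by
    rw [interior_Ici]
    exact fun x hx => ((hWd x hx).differentiableAt).differentiableWithinAt
  have hanti : AntitoneOn W (Set.Ici (0:ℝ)) :=
    antitoneOn_of_deriv_nonpos (convex_Ici 0) hWc hWdiff hderiv_le
  have hW0 : W 0 = 0 := by
    rw [hW_def]
    simp [hV_def, hG_def, hχ0, intervalIntegral.integral_same]
  -- dissipation inequality
  have hVle : ∀ T : ℝ, 0 ≤ T →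
      χ T ⬝ᵥ (P (s T) *ᵥ χ T) ≤ ∫ τ in (0:ℝ)..T, η τ ⬝ᵥ η τ := by
    intro T hT
    have h0 : W T ≤ W 0 := hanti Set.self_mem_Ici hT hT
    rw [hW0] at h0
    have hVG : V T ≤ G T := by
      simp only [hW_def] at h0
      linarith [h0]
    have hint1 : IntervalIntegrable (fun τ => η τ ⬝ᵥ η τ) MeasureTheory.volume 0 T :=
      (hη.dotProduct hη).intervalIntegrable 0 T
    have hint2 : IntervalIntegrable (fun τ => lam * (rr τ ⬝ᵥ (M *ᵥ rr τ)))
        MeasureTheory.volume 0 T :=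
      (continuous_const.mul (hrrc.dotProduct
        (continuous_const.matrix_mulVec hrrc))).intervalIntegrable 0 T
    have hGsplit : G T = (∫ τ in (0:ℝ)..T, η τ ⬝ᵥ η τ)
        - ∫ τ in (0:ℝ)..T, lam * (rr τ ⬝ᵥ (M *ᵥ rr τ)) := by
      rw [hG_def]
      exact intervalIntegral.integral_sub hint1 hint2
    have hcongr : (∫ τ in (0:ℝ)..T, rr τ ⬝ᵥ (M *ᵥ rr τ))
        = ∫ τ in (0:ℝ)..T, r τ ⬝ᵥ (M *ᵥ r τ) := by
      apply intervalIntegral.integral_congr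
      intro τ hτ
      rw [Set.uIcc_of_le hT] at hτ
      show rr τ ⬝ᵥ (M *ᵥ rr τ) = r τ ⬝ᵥ (M *ᵥ r τ)
      rw [hrr_eq τ hτ.1]
    have hpos : 0 ≤ ∫ τ in (0:ℝ)..T, lam * (rr τ ⬝ᵥ (M *ᵥ rr τ)) := by
      rw [intervalIntegral.integral_const_mul, hcongr]
      exact mul_nonneg hlam (hIQC T hT)
    have hfin : V T ≤ ∫ τ in (0:ℝ)..T, η τ ⬝ᵥ η τ := by
      rw [hGsplit] at hVG
      linarith
    rw [hV_def] at hfin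
    simp only [hss_eq T hT] at hfin
    exact hfin
  -- Schur complement step
  have hzb : ∀ T : ℝ, 0 ≤ T →
      z T ⬝ᵥ z T ≤ σ ^ 2 * (χ T ⬝ᵥ (P (s T) *ᵥ χ T)) := by
    intro T hT
    have hσ2 : (0:ℝ) < σ ^ 2 := by positivity
    have hpd := (hSchur (s T) (hsS T hT)).posSemidef
    have key := (posSemidef_iff_dotProduct_mulVec.1 hpd).2 (Sum.elim (χ T) (-((σ ^ 2)⁻¹) • (C₂ (s T) *ᵥ χ T)))
    rw [star_trivial, schur_quad _ _ _ (ne_of_gt hσ2)] at key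
    rw [hz T]
    have hcc : σ ^ 2 * (σ ^ 2)⁻¹ = 1 := mul_inv_cancel₀ (ne_of_gt hσ2)
    have h4 : (σ ^ 2)⁻¹ * ((C₂ (s T) *ᵥ χ T) ⬝ᵥ (C₂ (s T) *ᵥ χ T))
        ≤ χ T ⬝ᵥ (P (s T) *ᵥ χ T) := by linarith
    have h5 := mul_le_mul_of_nonneg_left h4 (le_of_lt hσ2)
    rw [← mul_assoc, hcc, one_mul] at h5
    exact h5
  have part1 : ∀ T, 0 ≤ T →
      z T ⬝ᵥ z T ≤ σ ^ 2 * ∫ τ in (0:ℝ)..T, η τ ⬝ᵥ η τ := by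
    intro T hT
    exact le_trans (hzb T hT)
      (mul_le_mul_of_nonneg_left (hVle T hT) (sq_nonneg σ))
  refine ⟨part1, ?_⟩
  intro hInt t ht
  have h2 : (∫ τ in (0:ℝ)..t, η τ ⬝ᵥ η τ) ≤ ∫ τ in Set.Ioi (0:ℝ), η τ ⬝ᵥ η τ := by
    rw [intervalIntegral.integral_of_le ht]
    apply MeasureTheory.setIntegral_mono_set hInt
    · exact Filter.Eventually.of_forall (fun τ => dot_self_nonneg _)
    · exact (Set.Ioc_subset_Ioi_self).eventuallyLE
  have h3 : z t ⬝ᵥ z t ≤ σ ^ 2 * ∫ τ in Set.Ioi (0:ℝ), η τ ⬝ᵥ η τ :=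
    le_trans (part1 t ht) (mul_le_mul_of_nonneg_left h2 (sq_nonneg σ))
  calc Real.sqrt (z t ⬝ᵥ z t)
      ≤ Real.sqrt (σ ^ 2 * ∫ τ in Set.Ioi (0:ℝ), η τ ⬝ᵥ η τ) := Real.sqrt_le_sqrt h3
    _ = σ * Real.sqrt (∫ τ in Set.Ioi (0:ℝ), η τ ⬝ᵥ η τ) := by
        rw [Real.sqrt_mul (sq_nonneg σ), Real.sqrt_sq hσ.le]
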